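/- For any positive integer n >= 3, the dihedral group D_{2n} satisfies f(D_{2n}) = e(D_{2n}) = n, where d(D_{2n}) = n + 1. -/

import Mathlib

open List Subgroup

/-- The set of all products of the terms of `S` in all orders. -/
def PiSet {G : Type*} [Group G] (S : List G) : Set G :=
  {g | ∃ l : List G, l.Perm S ∧ l.prod = g}

/-- `S` is a product-one sequence if `1 ∈ Π(S)`. -/
def IsProdOne {G : Type*} [Group G] (S : List G) : Prop :=
  (1 : G) ∈ PiSet S

/-- The Davenport constant `d(G)`: the smallest `m` such that every sequence of
length `m` over `G` contains a nonempty product-one subsequence. -/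
noncomputable def dC (G : Type*) [Group G] : ℕ :=
  sInf {m | 0 < m ∧ ∀ S : List G, S.length = m →
    ∃ T : List G, T ≠ [] ∧ T.Sublist S ∧ IsProdOne T}

/-- `e(G)`: the smallest `m` such that every nonempty product-one sequence over `G`
contains a nonempty product-one subsequence of length at most `m`. -/
noncomputable def eC (G : Type*) [Group G] : ℕ :=
  sInf {m | 0 < m ∧ ∀ S : List G, S ≠ [] → IsProdOne S →
    ∃ T : List G, T ≠ [] ∧ T.Sublist S ∧ T.length ≤ m ∧ IsProdOne T}

/-- `f(G)`: the smallest `m` such that every sequence of length `d(G)` over `G`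
contains a nonempty product-one subsequence of length at most `m`. -/
noncomputable def fC (G : Type*) [Group G] : ℕ :=
  sInf {m | 0 < m ∧ ∀ S : List G, S.length = dC G →
    ∃ T : List G, T ≠ [] ∧ T.Sublist S ∧ T.length ≤ m ∧ IsProdOne T}

/-- The `k`-th Davenport constant `d_k(G)`: the smallest `m` such that every sequence of
length `m` over `G` contains `k` pairwise disjoint nonempty product-one subsequences. -/
noncomputable def dkC (G : Type*) [Group G] (k : ℕ) : ℕ :=
  sInf {m | 0 < m ∧ ∀ S : List G, S.length = m →
    ∃ Ts : List (List G), Ts.length = k ∧ (∀ T ∈ Ts, T ≠ [] ∧ IsProdOne T) ∧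
      (Ts.flatten : Multiset G) ≤ (S : Multiset G)}

namespace DihedralFE
open DihedralGroup

variable {n : ℕ}

lemma prod_map_r (L : List (ZMod n)) : (L.map r).prod = r L.sum := by
  induction L with
  | nil => simp
  | cons a L ih => simp [ih, r_mul_r]

def sgn : DihedralGroup n →* Multiplicative (ZMod 2) where
  toFun x := match x with
    | .r _ => 1
    | .sr _ => Multiplicative.ofAdd 1
  map_one' := rfl
  map_mul' := by rintro (a | a) (b | b) <;> simp only [r_mul_r, r_mul_sr, sr_mul_r, sr_mul_sr] <;> rfl

@[simp] lemma sgn_r (i : ZMod n) : sgn (r i) = 1 := rfl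
@[simp] lemma sgn_sr (i : ZMod n) : sgn (sr i) = Multiplicative.ofAdd 1 := rfl

lemma prod_ne_one_of_perm_refl {i : ℕ} {l : List (DihedralGroup n)}
    (h : l.Perm (replicate i (r 1) ++ [sr 0])) : l.prod ≠ 1 := by
  intro hl
  have h1 : sgn (l.prod) = (l.map sgn).prod := by
    rw [MonoidHom.map_list_prod]
  have h2 : (l.map sgn).prod = ((replicate i (r 1) ++ [sr (0 : ZMod n)]).map sgn).prod :=
    (h.map sgn).prod_eq
  rw [hl] at h1
  simp [map_append] at h1 h2
  rw [h2] at h1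
  exact absurd h1.symm (by decide)

def exp : DihedralGroup n → ZMod n
  | .r i => i
  | .sr i => i

def isSr : DihedralGroup n → Bool
  | .r _ => false
  | .sr _ => true

lemma pair_get_sublist (l : List (ZMod n)) (i j : ℕ) (hij : i < j) (hj : j < l.length) :
    [l[i]'(by omega), l[j]'hj] <+ l := by
  have h1 : l[i]'(by omega) ∈ l.take (i + 1) := by
    rw [List.getElem_take' (xs := l) (by omega) (Nat.lt_succ_self i)]
    exact List.getElem_mem (by simp; omega)
  have h2 : l[j]'hj ∈ l.drop (i + 1) := by
    have : l[j]'hj = (l.drop (i+1))[j - (i+1)]'(by simp [List.length_drop]; omega) := by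
      rw [← List.getElem_drop' (xs := l) (by omega)]
      congr 1
      omega
    rw [this]
    exact List.getElem_mem _
  have := List.Sublist.append (List.singleton_sublist.2 h1) (List.singleton_sublist.2 h2)
  simpa [List.take_append_drop] using this

lemma extract {G : Type*} [Group G] {S w : List G} {bound : ℕ} (hw : w ≠ [])
    (hsub : w.Subperm S) (hlen : w.length ≤ bound) (hprod : ∃ v : List G, v.Perm w ∧ v.prod = 1) :
    ∃ T, T ≠ [] ∧ T.Sublist S ∧ T.length ≤ bound ∧ IsProdOne T := by
  obtain ⟨l, hl, hls⟩ := hsub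
  obtain ⟨v, hv, hv1⟩ := hprod
  refine ⟨l, ?_, hls, ?_, ⟨v, hv.trans hl.symm, hv1⟩⟩
  · intro h; subst h; exact hw (List.Perm.nil_eq hl ▸ rfl)
  · exact hl.length_eq ▸ hlen

section Main

variable {S : List (DihedralGroup n)} {A B : List (ZMod n)}

lemma block_sum (B : List (ZMod n)) {i j : ℕ} (hij : i ≤ j) :
    ((B.drop i).take (j - i)).sum = (B.take j).sum - (B.take i).sum := by
  have : B.take j = B.take i ++ (B.drop i).take (j - i) := by
    rw [← List.take_add]
    congr 1
    omega
  rw [this, List.sum_append]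
  ring

lemma block_sublist (B : List (ZMod n)) (i j : ℕ) : ((B.drop i).take (j - i)) <+ B :=
  (List.take_sublist _ _).trans (List.drop_sublist _ _)

lemma block_length (B : List (ZMod n)) {i j : ℕ} (hij : i ≤ j) (hj : j ≤ B.length) :
    ((B.drop i).take (j - i)).length = j - i := by
  simp [List.length_take, List.length_drop]
  omega

lemma rotBlock (hperm : (A.map sr ++ B.map r).Perm S) {i j : ℕ} (hij : i < j)
    (hj : j ≤ B.length) (hjn : j - i ≤ n)
    (hs : (B.take i).sum = (B.take j).sum) :
    ∃ T, T ≠ [] ∧ T.Sublist S ∧ T.length ≤ n ∧ IsProdOne T := by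
  set L := (B.drop i).take (j - i) with hL
  have hLsum : L.sum = 0 := by rw [hL, block_sum B hij.le, ← hs]; ring
  have hLlen : L.length = j - i := block_length B hij.le hj
  refine extract (w := L.map r) ?_ ?_ ?_ ⟨L.map r, Perm.refl _, ?_⟩
  · simp [← List.length_pos_iff_ne_nil, hLlen]; omega
  · refine Sublist.subperm ?_ |>.trans hperm.subperm
    exact ((Sublist.map r (block_sublist B i j)).trans (List.sublist_append_right _ _))
  · simpa [hLlen] using hjn
  · rw [prod_map_r, hLsum, ← one_def]

lemma mixedW (hperm : (A.map sr ++ B.map r).Perm S) {a b : ZMod n} {L : List (ZMod n)}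
    (hab : [a, b] <+ A) (hL : L <+ B)
    (hsum : L.sum = a - b ∨ L.sum = b - a) (hlen : L.length + 2 ≤ n) :
    ∃ T, T ≠ [] ∧ T.Sublist S ∧ T.length ≤ n ∧ IsProdOne T := by
  set w : List (DihedralGroup n) := [sr a, sr b] ++ L.map r with hw
  have hwsub : w.Subperm S := by
    refine Sublist.subperm ?_ |>.trans hperm.subperm
    have h1 : [sr a, sr b] <+ A.map sr := by
      have := Sublist.map sr hab
      simpa using this
    exact Sublist.append h1 (Sublist.map r hL)
  have keyprod : ∀ x₁ x₂ : ZMod n, L.sum = x₁ - x₂ →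
      (sr x₂ :: (L.map r ++ [sr x₁])).prod = 1 := by
    intro x₁ x₂ hx
    rw [List.prod_cons, List.prod_append, prod_map_r, hx]
    simp [r_mul_sr, sr_mul_sr]
  have hpa : (sr b :: (L.map r ++ [sr a])).Perm w :=
    calc sr b :: (L.map r ++ [sr a])
        ~ sr b :: (sr a :: L.map r) := Perm.cons _ (List.perm_append_singleton _ _)
      _ ~ sr a :: sr b :: L.map r := List.Perm.swap _ _ _
  have hpb : (sr a :: (L.map r ++ [sr b])).Perm w :=
    Perm.cons _ (List.perm_append_singleton _ _)
  refine extract (by simp [hw]) hwsub (by simp [hw]; omega) ?_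
  rcases hsum with h | h
  · exact ⟨_, hpa, keyprod a b h⟩
  · exact ⟨_, hpb, keyprod b a h⟩

lemma decomp (S : List (DihedralGroup n)) :
    ∃ A B : List (ZMod n), (A.map sr ++ B.map r).Perm S ∧
      A.length + B.length = S.length := by
  classical
  refine ⟨(S.filter isSr).map exp, (S.filter (fun x => !isSr x)).map exp, ?_, ?_⟩
  · have h1 : ((S.filter isSr).map exp).map sr = S.filter isSr := by
      rw [List.map_map]
      apply List.map_congr_left ?_ |>.trans (List.map_id _)
      intro x hx
      have := List.of_mem_filter hx
      cases x with
      | r i => simp [isSr] at this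
      | sr i => rfl
    have h2 : ((S.filter (fun x => !isSr x)).map exp).map r = S.filter (fun x => !isSr x) := by
      rw [List.map_map]
      apply List.map_congr_left ?_ |>.trans (List.map_id _)
      intro x hx
      have := List.of_mem_filter hx
      cases x with
      | r i => rfl
      | sr i => simp [isSr] at this
    rw [h1, h2]
    exact List.filter_append_perm _ _
  · have := (List.filter_append_perm isSr S).length_eq
    simpa using this

lemma keyA (hn : 3 ≤ n) (S : List (DihedralGroup n)) (hS : S.length = n + 1) :
    ∃ T, T ≠ [] ∧ T.Sublist S ∧ T.length ≤ n ∧ IsProdOne T := by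
  classical
  haveI : NeZero n := ⟨by omega⟩
  obtain ⟨A, B, hperm, hlen⟩ := decomp S
  rw [hS] at hlen
  by_cases hnd : A.Nodup
  swap
  · rw [List.nodup_iff_count_le_one] at hnd
    push_neg at hnd
    obtain ⟨a, ha⟩ := hnd
    refine extract (w := [sr a, sr a]) (by simp) ?_ (by simp; omega) ⟨_, Perm.refl _, ?_⟩
    · refine (List.subperm_ext_iff.2 ?_).trans hperm.subperm
      intro x hx
      simp at hx
      subst hx
      have hc : List.count (sr a) (A.map sr) = A.count a :=
        List.count_map_of_injective _ _ (fun x y h => by injection h) _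
      rw [List.count_append, hc]
      have hnb : ¬ (sr a ∈ B.map r) := by simp
      rw [List.count_eq_zero.2 hnb]
      have hc2 : List.count (sr a) [sr a, sr a] = 2 := by simp
      omega
    · simp [sr_mul_sr]
  have hkn : A.length ≤ n := by
    have := hnd.length_le_card
    rwa [ZMod.card] at this
  by_cases hk2 : 2 ≤ A.length
  · by_cases hcol : ∃ i j : ℕ, i < j ∧ j ≤ B.length ∧ (B.take i).sum = (B.take j).sum
    · obtain ⟨i, j, hij, hjm, hsij⟩ := hcol
      exact rotBlock hperm hij hjm (by omega) hsij
    · push_neg at hcol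
      obtain ⟨x, y, hxy, hFxy⟩ := Fintype.exists_ne_map_eq_of_card_lt
        (fun x : Fin (B.length + 1) ⊕ Fin (A.length - 1) =>
          match x with
          | Sum.inl i => (B.take (i : ℕ)).sum
          | Sum.inr l => (B.take 1).sum +
              (A[(l : ℕ) + 1]'(by have := l.isLt; omega) - A[0]'(by omega)))
        (by simp [ZMod.card]; omega)
      have main : ∀ (i : Fin (B.length + 1)) (l : Fin (A.length - 1)),
          (B.take (i : ℕ)).sum = (B.take 1).sum +
            (A[(l : ℕ) + 1]'(by have := l.isLt; omega) - A[0]'(by omega)) →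
          ∃ T, T ≠ [] ∧ T.Sublist S ∧ T.length ≤ n ∧ IsProdOne T := by
        intro i l hil
        have hlk : (l : ℕ) + 1 < A.length := by have := l.isLt; omega
        have hab : [A[0]'(by omega), A[(l : ℕ) + 1]'hlk] <+ A :=
          pair_get_sublist A 0 ((l : ℕ) + 1) (by omega) hlk
        have hane : A[0]'(by omega) ≠ A[(l : ℕ) + 1]'hlk := by
          intro h
          have := (List.Nodup.getElem_inj_iff hnd).1 h
          omega
        rcases Nat.lt_trichotomy (i : ℕ) 1 with hi0 | hi1 | hi2
        · have hi : (i : ℕ) = 0 := by omega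
          rw [hi] at hil
          have hsum : ((B.drop 0).take (1 - 0)).sum
              = A[0]'(by omega) - A[(l : ℕ) + 1]'hlk := by
            rw [block_sum B (by omega)]
            simp at hil ⊢
            linear_combination -hil
          refine mixedW hperm hab (block_sublist B 0 1) (Or.inl hsum) ?_
          rw [block_length B (by omega) (by omega)]
          omega
        · exfalso
          rw [hi1] at hil
          have hz : A[(l : ℕ) + 1]'hlk - A[0]'(by omega) = 0 := by linear_combination -hil
          exact hane (sub_eq_zero.mp hz).symm
        · have hsum : ((B.drop 1).take ((i : ℕ) - 1)).sum
              = A[(l : ℕ) + 1]'hlk - A[0]'(by omega) := by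
            rw [block_sum B (by omega)]
            linear_combination hil
          refine mixedW hperm hab (block_sublist B 1 (i : ℕ)) (Or.inr hsum) ?_
          rw [block_length B (by omega) (by have := i.isLt; omega)]
          have := i.isLt
          omega
      rcases x with i | l <;> rcases y with j | l'
      · exfalso
        have hij : (i : ℕ) ≠ j := by simpa [Fin.ext_iff] using hxy
        rcases Nat.lt_or_ge (i : ℕ) (j : ℕ) with h | h
        · exact hcol i j h (by have := j.isLt; omega) hFxy
        · exact hcol j i (by omega) (by have := i.isLt; omega) hFxy.symm
      · exact main i l' hFxy
      · exact main j l hFxy.symm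
      · exfalso
        have heq : A[(l : ℕ) + 1]'(by have := l.isLt; omega)
            = A[(l' : ℕ) + 1]'(by have := l'.isLt; omega) := by
          linear_combination hFxy
        have h2 := (List.Nodup.getElem_inj_iff hnd).1 heq
        exact hxy (congrArg Sum.inr (Fin.ext (by omega)))
  · have hmn : n ≤ B.length := by omega
    obtain ⟨x, y, hxy, hFxy⟩ := Fintype.exists_ne_map_eq_of_card_lt
      (fun i : Fin (n + 1) => (B.take (i : ℕ)).sum) (by simp [ZMod.card])
    have hij : (x : ℕ) ≠ y := by simpa [Fin.ext_iff] using hxy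
    rcases Nat.lt_or_ge (x : ℕ) (y : ℕ) with h | h
    · exact rotBlock hperm h (by have := y.isLt; omega) (by omega) hFxy
    · exact rotBlock hperm (by omega : (y : ℕ) < x) (by have := x.isLt; omega)
        (by omega) hFxy.symm

end Main

lemma subl_r1 [NeZero n] {j : ℕ} {T : List (DihedralGroup n)}
    (hT : T <+ replicate j (r 1)) (hpo : IsProdOne T) : n ∣ T.length := by
  obtain ⟨i, hij, rfl⟩ := List.sublist_replicate_iff.1 hT
  obtain ⟨l, hl, hl1⟩ := hpo
  rw [List.perm_replicate.1 hl, List.prod_replicate, r_one_pow, one_def] at hl1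
  injection hl1 with h
  rw [List.length_replicate]
  exact (ZMod.natCast_eq_zero_iff i n).1 h

lemma with_sr {j : ℕ} {T : List (DihedralGroup n)}
    (hT : T <+ replicate j (r 1) ++ [sr 0]) (hpo : IsProdOne T) :
    T <+ replicate j (r 1) := by
  obtain ⟨T₁, T₂, rfl, h1, h2⟩ := List.sublist_append_iff.1 hT
  rcases List.sublist_singleton.1 h2 with rfl | rfl
  · simpa using h1
  · exfalso
    obtain ⟨i, hij, rfl⟩ := List.sublist_replicate_iff.1 h1
    obtain ⟨l, hl, hl1⟩ := hpo
    exact prod_ne_one_of_perm_refl hl hl1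

lemma repl_po [NeZero n] : IsProdOne (replicate n (r 1) : List (DihedralGroup n)) :=
  ⟨replicate n (r 1), Perm.refl _, by
    rw [List.prod_replicate, r_one_pow, ZMod.natCast_self]
    exact one_def.symm⟩

end DihedralFE

/-- For `n ≥ 3`, `f(D_{2n}) = e(D_{2n}) = n`, where `d(D_{2n}) = n + 1`. -/
theorem dihedral_f_e (n : ℕ) (hn : 3 ≤ n) :
    fC (DihedralGroup n) = n ∧ eC (DihedralGroup n) = n ∧
      dC (DihedralGroup n) = n + 1 := by
  classical
  haveI : NeZero n := ⟨by omega⟩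
  open DihedralGroup in
  -- d(G) = n + 1
  have dmem : (n + 1) ∈ {m | 0 < m ∧ ∀ S : List (DihedralGroup n), S.length = m →
      ∃ T, T ≠ [] ∧ T.Sublist S ∧ IsProdOne T} := by
    refine ⟨by omega, fun S hS => ?_⟩
    obtain ⟨T, h1, h2, _, h4⟩ := DihedralFE.keyA hn S hS
    exact ⟨T, h1, h2, h4⟩
  have dlb : ∀ m ∈ {m | 0 < m ∧ ∀ S : List (DihedralGroup n), S.length = m →
      ∃ T, T ≠ [] ∧ T.Sublist S ∧ IsProdOne T}, n + 1 ≤ m := by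
    rintro m ⟨hm0, hm⟩
    by_contra hcon
    push_neg at hcon
    have hmn : m ≤ n := by omega
    obtain ⟨T, h1, h2, h4⟩ := hm (replicate (m - 1) (r 1) ++ [sr 0]) (by simp; omega)
    have hsub := DihedralFE.with_sr h2 h4
    have hdvd := DihedralFE.subl_r1 hsub h4
    have hlen : T.length ≤ m - 1 := by
      have := hsub.length_le
      simpa using this
    have : T.length = 0 := Nat.eq_zero_of_dvd_of_lt hdvd (by omega)
    exact h1 (List.length_eq_zero_iff.1 this)
  have hd : dC (DihedralGroup n) = n + 1 := by
    unfold dC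
    exact le_antisymm (Nat.sInf_le dmem) (le_csInf ⟨_, dmem⟩ dlb)
  -- e(G) = n
  have emem : n ∈ {m | 0 < m ∧ ∀ S : List (DihedralGroup n), S ≠ [] → IsProdOne S →
      ∃ T, T ≠ [] ∧ T.Sublist S ∧ T.length ≤ m ∧ IsProdOne T} := by
    refine ⟨by omega, fun S hne hpo => ?_⟩
    by_cases hlen : S.length ≤ n
    · exact ⟨S, hne, Sublist.refl _, hlen, hpo⟩
    · obtain ⟨T, h1, h2, h3, h4⟩ := DihedralFE.keyA hn (S.take (n + 1))
        (by rw [List.length_take]; omega)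
      exact ⟨T, h1, h2.trans (List.take_sublist _ _), h3, h4⟩
  have elb : ∀ m ∈ {m | 0 < m ∧ ∀ S : List (DihedralGroup n), S ≠ [] → IsProdOne S →
      ∃ T, T ≠ [] ∧ T.Sublist S ∧ T.length ≤ m ∧ IsProdOne T}, n ≤ m := by
    rintro m ⟨hm0, hm⟩
    by_contra hcon
    push_neg at hcon
    have hne : (replicate n (r 1) : List (DihedralGroup n)) ≠ [] := by
      intro h
      have := congrArg List.length h
      simp at this
      omega
    obtain ⟨T, h1, h2, h3, h4⟩ := hm (replicate n (r 1)) hne DihedralFE.repl_po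
    have hdvd := DihedralFE.subl_r1 h2 h4
    have : T.length = 0 := Nat.eq_zero_of_dvd_of_lt hdvd (by omega)
    exact h1 (List.length_eq_zero_iff.1 this)
  have he : eC (DihedralGroup n) = n := by
    unfold eC
    exact le_antisymm (Nat.sInf_le emem) (le_csInf ⟨_, emem⟩ elb)
  -- f(G) = n
  have fmem : n ∈ {m | 0 < m ∧ ∀ S : List (DihedralGroup n), S.length = dC (DihedralGroup n) →
      ∃ T, T ≠ [] ∧ T.Sublist S ∧ T.length ≤ m ∧ IsProdOne T} := by
    refine ⟨by omega, fun S hS => ?_⟩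
    rw [hd] at hS
    exact DihedralFE.keyA hn S hS
  have flb : ∀ m ∈ {m | 0 < m ∧ ∀ S : List (DihedralGroup n), S.length = dC (DihedralGroup n) →
      ∃ T, T ≠ [] ∧ T.Sublist S ∧ T.length ≤ m ∧ IsProdOne T}, n ≤ m := by
    rintro m ⟨hm0, hm⟩
    by_contra hcon
    push_neg at hcon
    obtain ⟨T, h1, h2, h3, h4⟩ := hm (replicate n (r 1) ++ [sr 0]) (by rw [hd]; simp)
    have hsub := DihedralFE.with_sr h2 h4
    have hdvd := DihedralFE.subl_r1 hsub h4
    have : T.length = 0 := Nat.eq_zero_of_dvd_of_lt hdvd (by omega)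
    exact h1 (List.length_eq_zero_iff.1 this)
  have hf : fC (DihedralGroup n) = n := by
    unfold fC
    exact le_antisymm (Nat.sInf_le fmem) (le_csInf ⟨_, fmem⟩ flb)
  exact ⟨hf, he, hd⟩
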